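/- Let a_k ∈ D with |a_k| → 1, and set b_k = a_k + ε_k with ε_k > 0 and ε_k < dist(a_k, 𝕋)². Then the Blaschke factors a_k(z) = (conj(a_k)/|a_k|)·(a_k - z)/(1 - conj(a_k)z) and b_k(z) (similarly defined, assuming b_k ∈ D \ {0}) satisfy sup_{θ} |b_k(e^{iθ})/a_k(e^{iθ}) - 1| → 0 as k → ∞. -/

import Mathlib

open Complex Filter

set_option maxHeartbeats 1000000 in
lemma blaschke_key (a b z : ℂ) (ε δ η : ℝ) (hz : ‖z‖ = 1)
    (ha : ‖a‖ < 1) (ha0 : a ≠ 0)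
    (hε : 0 < ε) (hεlt : ε < (1 - ‖a‖)^2)
    (hbdef : b = a + (ε : ℂ)) (hb0 : b ≠ 0)
    (hη0 : 0 < η) (hη1 : η ≤ 1/2) (hηδ : 29*η ≤ δ)
    (haη : 1 - η < ‖a‖) :
    ‖(((starRingEnd ℂ) b / ‖b‖) *
            ((b - z) / (1 - (starRingEnd ℂ) b * z))) /
          (((starRingEnd ℂ) a / ‖a‖) *
            ((a - z) / (1 - (starRingEnd ℂ) a * z))) - 1‖ < δ := by
  set A := ‖a‖ with hA
  set B := ‖b‖ with hB
  set d := 1 - A with hdd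
  have hA0 : 0 < A := norm_pos_iff.mpr ha0
  have hB0 : 0 < B := norm_pos_iff.mpr hb0
  have hd : 0 < d := by simp only [hdd]; linarith
  have hdη : d < η := by simp only [hdd]; linarith
  have hd2 : d ≤ 1/2 := by linarith
  have hAhalf : (1:ℝ)/2 ≤ A := by simp only [hdd] at hd2 ⊢; linarith
  have hεd : ε < d^2 := by simpa [hdd] using hεlt
  have hd1 : d < 1 := by linarith
  have hba : b - a = (ε : ℂ) := by rw [hbdef]; ring
  have hbae : ‖b - a‖ = ε := by rw [hba, Complex.norm_real, Real.norm_eq_abs, abs_of_pos hε]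
  have hABe : |A - B| ≤ ε := by
    have := abs_norm_sub_norm_le a b
    rwa [show a - b = -(b - a) by ring, norm_neg, hbae] at this
  have hd2q : d^2 ≤ 1/4 := by nlinarith
  have hBq : (1:ℝ)/4 ≤ B := by
    have h1 : A - B ≤ ε := (abs_le.mp hABe).2
    nlinarith
  -- lower bounds on denominators
  have haz : d ≤ ‖a - z‖ := by
    have h := abs_norm_sub_norm_le z a
    rw [hz, show z - a = -(a - z) by ring, norm_neg] at h
    have := (abs_le.mp h).2
    simp only [hdd]; linarith
  have haz0 : a - z ≠ 0 := by
    intro h; rw [h] at haz; simp at haz; linarith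
  have h1az : d ≤ ‖1 - (starRingEnd ℂ) a * z‖ := by
    have h := abs_norm_sub_norm_le 1 ((starRingEnd ℂ) a * z)
    rw [norm_one, norm_mul, Complex.norm_conj, hz, mul_one] at h
    have := (abs_le.mp h).2
    simp only [hdd]; linarith
  have h1az0 : 1 - (starRingEnd ℂ) a * z ≠ 0 := by
    intro h; rw [h] at h1az; simp at h1az; linarith
  have h1bz : d - ε ≤ ‖1 - (starRingEnd ℂ) b * z‖ := by
    have h := abs_norm_sub_norm_le 1 ((starRingEnd ℂ) b * z)
    rw [norm_one, norm_mul, Complex.norm_conj, hz, mul_one] at h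
    have h2 : B ≤ A + ε := by have := (abs_le.mp hABe).1; linarith
    have := (abs_le.mp h).2
    simp only [hdd]; nlinarith
  have hdε : 0 < d - ε := by nlinarith
  have h1bz0 : 1 - (starRingEnd ℂ) b * z ≠ 0 := by
    intro h; rw [h] at h1bz; simp at h1bz; linarith
  have hca0 : (starRingEnd ℂ) a ≠ 0 := by simpa using ha0
  have hAc0 : (A : ℂ) ≠ 0 := by exact_mod_cast hA0.ne'
  have hBc0 : (B : ℂ) ≠ 0 := by exact_mod_cast hB0.ne'
  clear_value A B d
  set F1 : ℂ := ((starRingEnd ℂ) b * A) / ((B : ℂ) * (starRingEnd ℂ) a) with hF1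
  set F2 : ℂ := (b - z) / (a - z) with hF2
  set F3 : ℂ := (1 - (starRingEnd ℂ) a * z) / (1 - (starRingEnd ℂ) b * z) with hF3
  have hE : (((starRingEnd ℂ) b / (B : ℂ) * ((b - z) / (1 - (starRingEnd ℂ) b * z))) /
          ((starRingEnd ℂ) a / (A : ℂ) * ((a - z) / (1 - (starRingEnd ℂ) a * z)))) = F1 * F2 * F3 := by
    rw [hF1, hF2, hF3]
    field_simp
  rw [hE]
  -- bounds on the pieces
  have hcbe : (starRingEnd ℂ) b = (starRingEnd ℂ) a + (ε : ℂ) := by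
    rw [hbdef]; simp [Complex.conj_ofReal]
  have b1 : ‖F1 - 1‖ ≤ 16 * ε := by
    have hnum : F1 - 1 = ((starRingEnd ℂ) a * ((A : ℂ) - B) + (ε : ℂ) * A) / ((B : ℂ) * (starRingEnd ℂ) a) := by
      rw [hF1, hcbe]; field_simp; ring
    rw [hnum, norm_div, norm_mul, Complex.norm_conj, ← hA, Complex.norm_real, Real.norm_eq_abs, abs_of_pos hB0]
    have hnb : ‖(starRingEnd ℂ) a * ((A : ℂ) - B) + (ε : ℂ) * A‖ ≤ 2 * ε := by
      refine le_trans (norm_add_le _ _) ?_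
      rw [norm_mul, norm_mul, Complex.norm_conj, ← hA, Complex.norm_real, Complex.norm_real,
        Real.norm_eq_abs, Real.norm_eq_abs,
        abs_of_pos hε, abs_of_pos hA0]
      have hre : ‖(A : ℂ) - (B : ℂ)‖ = |A - B| := by
        rw [← Complex.ofReal_sub, Complex.norm_real, Real.norm_eq_abs]
      rw [hre]
      nlinarith [abs_nonneg (A - B)]
    rw [div_le_iff₀ (by positivity)]
    have hden : (1:ℝ)/8 ≤ B * A := by nlinarith
    nlinarith [mul_le_mul_of_nonneg_left hden hε.le]
  have b2 : ‖F2 - 1‖ ≤ d := by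
    have hnum : F2 - 1 = (ε : ℂ) / (a - z) := by
      rw [hF2, ← hba, div_sub_one haz0]
      congr 1; ring
    rw [hnum, norm_div, Complex.norm_real, Real.norm_eq_abs, abs_of_pos hε]
    rw [div_le_iff₀ (lt_of_lt_of_le hd haz)]
    nlinarith
  have b3 : ‖F3 - 1‖ ≤ 2 * d := by
    have hnum : F3 - 1 = ((ε : ℂ) * z) / (1 - (starRingEnd ℂ) b * z) := by
      have h0 : 1 - ((starRingEnd ℂ) a + (ε:ℂ)) * z ≠ 0 := by rw [← hcbe]; exact h1bz0
      rw [hF3, hcbe, div_sub_one h0]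
      congr 1; ring
    rw [hnum, norm_div, norm_mul, Complex.norm_real, Real.norm_eq_abs, abs_of_pos hε, hz, mul_one]
    rw [div_le_iff₀ (lt_of_lt_of_le hdε h1bz)]
    nlinarith
  have bF2 : ‖F2‖ ≤ 3/2 := by
    have := norm_sub_le F2 1
    calc ‖F2‖ = ‖(F2 - 1) + 1‖ := by ring_nf
      _ ≤ ‖F2 - 1‖ + ‖1‖ := norm_add_le _ _
      _ ≤ d + 1 := by rw [norm_one]; linarith
      _ ≤ 3/2 := by linarith
  have bF3 : ‖F3‖ ≤ 2 := by
    calc ‖F3‖ = ‖(F3 - 1) + 1‖ := by ring_nf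
      _ ≤ ‖F3 - 1‖ + ‖1‖ := norm_add_le _ _
      _ ≤ 2*d + 1 := by rw [norm_one]; linarith
      _ ≤ 2 := by linarith
  have hsplit : F1 * F2 * F3 - 1 = (F1 - 1) * (F2 * F3) + ((F2 - 1) * F3 + (F3 - 1)) := by
    ring
  rw [hsplit]
  have htri : ‖(F1 - 1) * (F2 * F3) + ((F2 - 1) * F3 + (F3 - 1))‖
      ≤ ‖F1 - 1‖ * (‖F2‖ * ‖F3‖)
        + (‖F2 - 1‖ * ‖F3‖ + ‖F3 - 1‖) := by
    refine le_trans (norm_add_le _ _) ?_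
    gcongr
    · rw [norm_mul, norm_mul]
    · exact le_trans (norm_add_le _ _) (by rw [norm_mul])
  refine lt_of_le_of_lt htri ?_
  have h1 : ‖F1 - 1‖ * (‖F2‖ * ‖F3‖) ≤ 16 * ε * 3 := by
    have h0' : 0 ≤ ‖F2‖ := norm_nonneg _
    have h0'' : 0 ≤ ‖F3‖ := norm_nonneg _
    have hYZ : ‖F2‖ * ‖F3‖ ≤ 3 := by nlinarith
    nlinarith [mul_le_mul b1 hYZ (by positivity) (by linarith : (0:ℝ) ≤ 16*ε)]
  have h2 : ‖F2 - 1‖ * ‖F3‖ ≤ 2 * d := by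
    have h0 : 0 ≤ ‖F2 - 1‖ := norm_nonneg _
    nlinarith [mul_le_mul b2 bF3 (norm_nonneg F3) hd.le]
  nlinarith

/-- If `a k` are points of the punctured unit disk with `|a k| → 1` and
`b k = a k + ε k` with `0 < ε k < dist(a k, 𝕋)²` and `b k` also in the punctured disk, then
the quotients of the corresponding Blaschke factors tend to `1` uniformly on the circle. -/
theorem blaschke_factor_quotient_uniformly_one
    (a : ℕ → ℂ) (ε : ℕ → ℝ) (b : ℕ → ℂ)
    (ha : ∀ k, ‖a k‖ < 1) (ha0 : ∀ k, a k ≠ 0)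
    (habs : Tendsto (fun k => ‖a k‖) atTop (nhds 1))
    (hε : ∀ k, 0 < ε k) (hεlt : ∀ k, ε k < (1 - ‖a k‖)^2)
    (hbdef : ∀ k, b k = a k + (ε k : ℂ))
    (hb : ∀ k, ‖b k‖ < 1) (hb0 : ∀ k, b k ≠ 0) :
    ∀ δ : ℝ, 0 < δ → ∃ N : ℕ, ∀ k ≥ N, ∀ θ : ℝ,
      ‖
        (((starRingEnd ℂ) (b k) / ‖b k‖) *
            ((b k - Complex.exp (θ * Complex.I)) /
              (1 - (starRingEnd ℂ) (b k) * Complex.exp (θ * Complex.I)))) /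
          (((starRingEnd ℂ) (a k) / ‖a k‖) *
            ((a k - Complex.exp (θ * Complex.I)) /
              (1 - (starRingEnd ℂ) (a k) * Complex.exp (θ * Complex.I)))) - 1‖ < δ := by
  intro δ hδ
  set η := min (1/2 : ℝ) (δ/29) with hη
  have hη0 : 0 < η := lt_min (by norm_num) (by positivity)
  have hη1 : η ≤ 1/2 := min_le_left _ _
  have hηδ : 29 * η ≤ δ := by
    have := min_le_right (1/2 : ℝ) (δ/29)
    rw [hη]; linarith
  have hev : ∀ᶠ k in atTop, 1 - η < ‖a k‖ :=
    habs.eventually (eventually_gt_nhds (by linarith))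
  obtain ⟨N, hN⟩ := eventually_atTop.mp hev
  refine ⟨N, fun k hk θ => ?_⟩
  exact blaschke_key (a k) (b k) _ (ε k) δ η (Complex.norm_exp_ofReal_mul_I θ)
    (ha k) (ha0 k) (hε k) (hεlt k) (hbdef k) (hb0 k) hη0 hη1 hηδ (hN k hk)
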